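/- Let F_n (n ≥ 2) be the free group with basis x_1,…,x_n and let ql : F_n → ℤ be defined on reduced syllable forms by ql(x_{i₁}^{α₁}⋯x_{i_t}^{α_t}) = Σ_{j=1}^t tr(α_j). Then for all f, g ∈ F_n the commutator [f,g] = f⁻¹g⁻¹fg satisfies -9 ≤ ql([f,g]) ≤ 9. -/

import Mathlib

/-- `tr m` is `-1, 0, 1` according as `m ≡ -1, 0, 1 (mod 3)`. -/
def tr (m : ℤ) : ℤ := if m % 3 = 0 then 0 else if m % 3 = 1 then 1 else -1

set_option linter.unusedSectionVars false
namespace QL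
variable {α : Type*}

def sbc (R : α → α → Bool) (a : α) : List (List α) → List (List α)
  | (b :: g) :: gs => if R a b then (a :: b :: g) :: gs else [a] :: (b :: g) :: gs
  | _ => [[a]]

def sb (R : α → α → Bool) : List α → List (List α)
  | [] => []
  | a :: as => sbc R a (sb R as)

theorem loop_eq (R : α → α → Bool) : ∀ (l : List α) (ag : α) (g : List α) (gs : List (List α)),
    List.splitBy.loop R l ag g gs = gs.reverse ++ (
      match sb R l with
      | (b :: h) :: t =>
        if R ag b then ((ag::g).reverse ++ b :: h) :: t else (ag::g).reverse :: (b :: h) :: t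
      | _ => [(ag::g).reverse]) := by
  intro l
  induction l with
  | nil => intro ag g gs; simp [List.splitBy.loop, sb]
  | cons a as ih =>
    intro ag g gs
    rw [List.splitBy.loop]
    rcases hsb : sb R as with _ | ⟨⟨⟩ | ⟨b, h⟩, t⟩
    · by_cases hR : R ag a <;>
        simp [hR, ih, hsb, sb, sbc]
    · by_cases hR : R ag a <;>
        simp [hR, ih, hsb, sb, sbc]
    · by_cases hR : R ag a <;> by_cases hab : R a b <;>
        simp [hR, hab, ih, hsb, sb, sbc]

theorem splitBy_eq_sb (R : α → α → Bool) (l : List α) : List.splitBy R l = sb R l := by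
  cases l with
  | nil => rfl
  | cons a as =>
    rw [List.splitBy, loop_eq]
    rcases hsb : sb R as with _ | ⟨⟨⟩ | ⟨b, h⟩, t⟩
    · simp [hsb, sb, sbc]
    · simp [hsb, sb, sbc]
    · by_cases hab : R a b <;> simp [hab, hsb, sb, sbc]


section W
variable [BEq α] [LawfulBEq α]

/-- exponent of a letter -/
def e (b : Bool) : ℤ := if b then 1 else -1

/-- sum of the first group (head syllable exponent) -/
def hs : List (α × Bool) → ℤ
  | [] => 0
  | x :: m => e x.2 + (if (m.head?.any fun y => x.1 == y.1) then hs m else 0)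

/-- recursive version of ql -/
def ql2 : List (α × Bool) → ℤ
  | [] => 0
  | x :: m =>
    if (m.head?.any fun y => x.1 == y.1) then ql2 m - tr (hs m) + tr (e x.2 + hs m)
    else ql2 m + tr (e x.2)

theorem hs_cons (x : α × Bool) (m : List (α × Bool)) :
    hs (x :: m) = e x.2 + (if (m.head?.any fun y => x.1 == y.1) then hs m else 0) := by
  rw [hs]

theorem hs_singleton (x : α × Bool) : hs [x] = e x.2 := by
  rw [hs_cons]; simp

theorem ql2_cons (x : α × Bool) (m : List (α × Bool)) :
    ql2 (x :: m) = if (m.head?.any fun y => x.1 == y.1) then ql2 m - tr (hs m) + tr (e x.2 + hs m)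
      else ql2 m + tr (e x.2) := by
  rw [ql2]

def gsum (gs : List (List (α × Bool))) : ℤ :=
  (gs.map (fun s => tr ((s.map (fun p => e p.2)).sum))).sum

theorem sb_spec : ∀ l : List (α × Bool),
    gsum (sb (fun p q => p.1 == q.1) l) = ql2 l ∧
    (∀ x m, l = x :: m → ∃ h t, sb (fun p q => p.1 == q.1) l = (x :: h) :: t ∧
      ((x :: h).map (fun p => e p.2)).sum = hs l) := by
  intro l
  induction l with
  | nil => exact ⟨rfl, by simp⟩
  | cons x m ih =>
    obtain ⟨ihg, ihh⟩ := ih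
    cases m with
    | nil =>
      refine ⟨by simp [sb, sbc, gsum, ql2, hs], ?_⟩
      rintro x' m' ⟨rfl, rfl⟩
      exact ⟨[], [], by simp [sb, sbc, hs]⟩
    | cons y m' =>
      obtain ⟨h, t, hsb, hsum⟩ := ihh y m' rfl
      by_cases hxy : (x.1 == y.1)
      · have hsb' : sb (fun p q => p.1 == q.1) (x :: y :: m') = (x :: y :: h) :: t := by
          rw [sb, hsb, sbc]
          simp [hxy]
        constructor
        · rw [hsb']
          rw [hsb] at ihg
          rw [ql2_cons]
          simp only [List.head?_cons, Option.any_some, hxy, if_true]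
          simp only [gsum, List.map_cons, List.sum_cons] at ihg ⊢
          simp only [List.map_cons, List.sum_cons] at hsum
          rw [show e x.2 + (e y.2 + (List.map (fun p => e p.2) h).sum) = e x.2 + hs (y :: m') by omega]
          rw [show e y.2 + (List.map (fun p => e p.2) h).sum = hs (y :: m') by omega] at ihg
          omega
        · rintro x' m'' ⟨rfl, rfl⟩
          refine ⟨y :: h, t, hsb', ?_⟩
          rw [hs_cons]
          simp only [List.head?_cons, Option.any_some, hxy, if_true]
          simp only [List.map_cons, List.sum_cons] at hsum ⊢
          omega
      · have hsb' : sb (fun p q => p.1 == q.1) (x :: y :: m') = [x] :: (y :: h) :: t := by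
          rw [sb, hsb, sbc]
          simp [hxy]
        constructor
        · rw [hsb']
          rw [hsb] at ihg
          rw [ql2_cons]
          simp only [List.head?_cons, Option.any_some, hxy, if_false, Bool.false_eq_true]
          simp only [gsum, List.map_cons, List.sum_cons, List.map_nil, List.sum_nil,
            add_zero] at ihg ⊢
          omega
        · rintro x' m'' ⟨rfl, rfl⟩
          refine ⟨[], (y :: h) :: t, hsb', ?_⟩
          rw [hs_cons]
          simp [hxy, e]

theorem tr_neg (x : ℤ) : tr (-x) = - tr x := by
  unfold tr; split_ifs <;> omega

theorem tr_add_spec (x y : ℤ) :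
    (tr (x + y) - tr x - tr y = 0) ∨
    (tr (x + y) - tr x - tr y = -3 ∧ tr x = 1 ∧ tr y = 1) ∨
    (tr (x + y) - tr x - tr y = 3 ∧ tr x = -1 ∧ tr y = -1) := by
  unfold tr; split_ifs <;> omega

/-- the whole list is one group -/
def OG (l : List (α × Bool)) : Prop := l ≠ [] ∧ l.Chain' (fun p q => p.1 = q.1)

/-- the last letter of `l₁` has the same index as the first letter of `l₂` -/
def RL (l₁ l₂ : List (α × Bool)) : Prop :=
  ∃ z ∈ l₁.getLast?, ∃ w ∈ l₂.head?, z.1 = w.1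

theorem hs_append : ∀ (l₁ l₂ : List (α × Bool)), l₁ ≠ [] → l₂ ≠ [] →
    (hs (l₁ ++ l₂) = hs l₁ ∧ ¬(OG l₁ ∧ RL l₁ l₂)) ∨
    (hs (l₁ ++ l₂) = hs l₁ + hs l₂ ∧ OG l₁ ∧ RL l₁ l₂) := by
  intro l₁
  induction l₁ with
  | nil => intro l₂ h; exact absurd rfl h
  | cons x m ih =>
    intro l₂ _ h₂
    cases m with
    | nil =>
      obtain ⟨w, l₂', rfl⟩ := List.exists_cons_of_ne_nil h₂
      by_cases hxw : x.1 = w.1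
      · right
        refine ⟨?_, ⟨by simp, List.isChain_singleton x⟩, x, by simp, w, by simp, hxw⟩
        rw [List.singleton_append, hs_cons, hs_singleton]
        simp [hxw]
      · left
        constructor
        · rw [List.singleton_append, hs_cons, hs_singleton]
          simp [hxw]
        · rintro ⟨-, z, hz, w', hw', hzw⟩
          simp only [List.getLast?_singleton, Option.mem_some_iff] at hz
          simp only [List.head?_cons, Option.mem_some_iff] at hw'
          exact hxw (hz ▸ hw' ▸ hzw)
    | cons y m' =>
      have hm : (y :: m') ≠ [] := by simp
      by_cases hxy : x.1 = y.1
      · rcases ih l₂ hm h₂ with ⟨heq, hno⟩ | ⟨heq, hog, hrl⟩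
        · left
          constructor
          · rw [List.cons_append, hs_cons, hs_cons, heq]
            simp [hxy]
          · rintro ⟨hog', hrl'⟩
            refine hno ⟨⟨hm, hog'.2.tail⟩, ?_⟩
            rwa [RL, List.getLast?_cons_cons] at hrl'
        · right
          refine ⟨?_, ⟨by simp, List.isChain_cons_cons.mpr ⟨hxy, hog.2⟩⟩, ?_⟩
          · rw [List.cons_append, hs_cons, hs_cons, heq]
            simp [hxy, add_assoc]
          · rwa [RL, List.getLast?_cons_cons]
      · left
        constructor
        · rw [List.cons_append, hs_cons, hs_cons]
          simp [hxy]
        · rintro ⟨hog', -⟩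
          exact hxy (List.isChain_cons_cons.mp hog'.2).1

theorem e_not (b : Bool) : e (!b) = - e b := by cases b <;> simp [e]

open FreeGroup in
theorem invRev_cons (x : α × Bool) (m : List (α × Bool)) :
    invRev (x :: m) = invRev m ++ [(x.1, !x.2)] := by
  simp [invRev]

theorem invRev_ne_nil {l : List (α × Bool)} (h : l ≠ []) : FreeGroup.invRev l ≠ [] := by
  simpa [FreeGroup.invRev] using h

theorem head?_invRev (l : List (α × Bool)) :
    (FreeGroup.invRev l).head? = l.getLast?.map (fun p => (p.1, !p.2)) := by
  simp [FreeGroup.invRev]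

theorem getLast?_invRev (l : List (α × Bool)) :
    (FreeGroup.invRev l).getLast? = l.head?.map (fun p => (p.1, !p.2)) := by
  simp [FreeGroup.invRev]

theorem OG_invRev {l : List (α × Bool)} : OG (FreeGroup.invRev l) ↔ OG l := by
  unfold OG FreeGroup.invRev
  unfold List.Chain'
  rw [List.isChain_reverse, List.isChain_map]
  constructor
  · rintro ⟨h1, h2⟩
    exact ⟨by simpa using h1, h2.imp fun a b h => Eq.symm h⟩
  · rintro ⟨h1, h2⟩
    exact ⟨by simpa using h1, h2.imp fun a b h => Eq.symm h⟩

/-- sum of the last group (last syllable exponent) -/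
def ls (l : List (α × Bool)) : ℤ := - hs (FreeGroup.invRev l)

theorem ls_invRev (l : List (α × Bool)) : ls (FreeGroup.invRev l) = - hs l := by
  rw [ls, FreeGroup.invRev_invRev]

theorem ls_singleton (x : α × Bool) : ls [x] = e x.2 := by
  rw [ls, show FreeGroup.invRev [x] = [(x.1, !x.2)] by simp [FreeGroup.invRev], hs_singleton]
  simp [e_not]

theorem hs_of_OG {l : List (α × Bool)} (h : OG l) :
    hs l = (l.map (fun p => e p.2)).sum := by
  obtain ⟨hne, hch⟩ := h
  induction l with
  | nil => rfl
  | cons x m ih =>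
    cases m with
    | nil => simp [hs_singleton]
    | cons y m' =>
      rw [List.Chain', List.isChain_cons_cons] at hch
      rw [hs_cons]
      simp only [List.head?_cons, Option.any_some, hch.1, beq_self_eq_true, if_true,
        List.map_cons, List.sum_cons]
      rw [ih (by simp) hch.2]
      simp [hch.1]

theorem sum_map_neg' (l : List (α × Bool)) (f : α × Bool → ℤ) :
    (l.map (fun p => - f p)).sum = - (l.map f).sum := by
  induction l with
  | nil => simp
  | cons x m ih => simp [ih]; ring

theorem ls_of_OG {l : List (α × Bool)} (h : OG l) : ls l = hs l := by
  rw [ls, hs_of_OG (OG_invRev.mpr h), hs_of_OG h, FreeGroup.invRev]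
  simp only [List.map_reverse, List.sum_reverse, List.map_map]
  rw [show ((fun p : α × Bool => e p.2) ∘ fun g : α × Bool => (g.1, !g.2)) =
    (fun p : α × Bool => - e p.2) by funext p; simp [e_not]]
  rw [sum_map_neg']
  ring

theorem ql2_nil : ql2 ([] : List (α × Bool)) = 0 := rfl

theorem ql2_singleton (x : α × Bool) : ql2 [x] = tr (e x.2) := by
  rw [ql2_cons]; simp [ql2_nil]

theorem RL_invRev_singleton (x : α × Bool) (m : List (α × Bool)) :
    RL (FreeGroup.invRev m) [(x.1, !x.2)] ↔ RL [x] m := by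
  unfold RL
  rw [getLast?_invRev]
  cases m with
  | nil => simp
  | cons y m' => simp [eq_comm]

theorem RL_cons_cons (x y : α × Bool) (m l₂ : List (α × Bool)) :
    RL (x :: y :: m) l₂ ↔ RL (y :: m) l₂ := by
  unfold RL; rw [List.getLast?_cons_cons]

theorem RL_singleton_cons (x w : α × Bool) (l₂ : List (α × Bool)) :
    RL [x] (w :: l₂) ↔ x.1 = w.1 := by
  simp [RL]

theorem RL_singleton_head (x y : α × Bool) (m : List (α × Bool)) :
    RL [x] (y :: m) ↔ x.1 = y.1 := RL_singleton_cons x y m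

theorem ls_cons (x : α × Bool) (m : List (α × Bool)) (hm : m ≠ []) :
    (¬ (OG m ∧ RL [x] m) → ls (x :: m) = ls m) ∧
    ((OG m ∧ RL [x] m) → ls (x :: m) = e x.2 + ls m) := by
  have hinv : FreeGroup.invRev (x :: m) = FreeGroup.invRev m ++ [(x.1, !x.2)] := invRev_cons x m
  rcases hs_append (FreeGroup.invRev m) [(x.1, !x.2)] (invRev_ne_nil hm) (by simp)
    with ⟨heq, hno⟩ | ⟨heq, hog, hrl⟩
  · constructor
    · intro _
      rw [ls, hinv, heq, ← ls]
    · rintro ⟨hogm, hrlm⟩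
      exact absurd ⟨OG_invRev.mpr hogm, (RL_invRev_singleton x m).mpr hrlm⟩ hno
  · have h2 : OG m ∧ RL [x] m := ⟨OG_invRev.mp hog, (RL_invRev_singleton x m).mp hrl⟩
    constructor
    · intro h; exact absurd h2 h
    · intro _
      rw [ls, hinv, heq, hs_singleton]
      simp only [e_not]
      rw [ls]
      ring

theorem eps (l₂ : List (α × Bool)) (l₁ : List (α × Bool)) : ∃ ε,
    ql2 (l₁ ++ l₂) = ql2 l₁ + ql2 l₂ + ε ∧
    ((¬ RL l₁ l₂ ∧ ε = 0) ∨
     (RL l₁ l₂ ∧ ε = tr (ls l₁ + hs l₂) - tr (ls l₁) - tr (hs l₂))) := by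
  rcases eq_or_ne l₂ [] with rfl | h₂
  · exact ⟨0, by simp [ql2], Or.inl ⟨by simp [RL], rfl⟩⟩
  induction l₁ with
  | nil => exact ⟨0, by simp [ql2], Or.inl ⟨by simp [RL], rfl⟩⟩
  | cons x m ih =>
    cases m with
    | nil =>
      obtain ⟨w, l₂', rfl⟩ := List.exists_cons_of_ne_nil h₂
      by_cases c : x.1 = w.1
      · refine ⟨tr (e x.2 + hs (w :: l₂')) - tr (e x.2) - tr (hs (w :: l₂')), ?_, Or.inr ?_⟩
        · rw [List.singleton_append, ql2_cons, ql2_singleton]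
          simp only [List.head?_cons, Option.any_some, c, beq_self_eq_true, if_true]
          omega
        · rw [RL_singleton_cons, ls_singleton]
          exact ⟨c, rfl⟩
      · refine ⟨0, ?_, Or.inl ⟨by rwa [RL_singleton_cons], rfl⟩⟩
        rw [List.singleton_append, ql2_cons, ql2_singleton]
        have : (x.1 == w.1) = false := by simpa using c
        simp only [List.head?_cons, Option.any_some, this, if_false, Bool.false_eq_true]
        omega
    | cons y m' =>
      obtain ⟨ε', ihe, ihsp⟩ := ih
      have hhead : ((y :: m') ++ l₂).head? = some y := by simp
      by_cases c : x.1 = y.1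
      · rcases hs_append (y :: m') l₂ (by simp) h₂ with ⟨heq, hno⟩ | ⟨heq, hog, hrl⟩
        · refine ⟨ε', ?_, ?_⟩
          · rw [List.cons_append, ql2_cons, ql2_cons (m := y :: m')]
            rw [List.cons_append] at heq ihe ⊢
            simp only [hhead, List.head?_cons, Option.any_some, c, beq_self_eq_true, if_true]
            rw [heq, ihe]
            ring
          · rcases ihsp with ⟨hno', rfl⟩ | ⟨hrl', rfl⟩
            · exact Or.inl ⟨by rwa [RL_cons_cons], rfl⟩
            · refine Or.inr ⟨by rwa [RL_cons_cons], ?_⟩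
              have hnog : ¬ OG (y :: m') := fun h => hno ⟨h, hrl'⟩
              rw [(ls_cons x (y :: m') (by simp)).1 (fun h => hnog h.1)]
        · rcases ihsp with ⟨hno', rfl⟩ | ⟨hrl', heps⟩
          · exact absurd hrl hno'
          · have hlsm : ls (y :: m') = hs (y :: m') := ls_of_OG hog
            have hlsx : ls (x :: y :: m') = e x.2 + hs (y :: m') := by
              rw [(ls_cons x (y :: m') (by simp)).2
                ⟨hog, (RL_singleton_head x y m').mpr c⟩, hlsm]
            refine ⟨tr (e x.2 + hs (y :: m') + hs l₂) - tr (e x.2 + hs (y :: m')) - tr (hs l₂),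
              ?_, Or.inr ⟨by rwa [RL_cons_cons], by rw [hlsx, add_assoc]⟩⟩
            rw [List.cons_append, ql2_cons, ql2_cons (m := y :: m')]
            rw [List.cons_append] at heq ihe ⊢
            simp only [hhead, List.head?_cons, Option.any_some, c, beq_self_eq_true, if_true]
            rw [hlsm] at heps
            rw [heq, ihe]
            rw [show e x.2 + (hs (y :: m') + hs l₂) = e x.2 + hs (y :: m') + hs l₂ from
              (add_assoc _ _ _).symm]
            omega
      · refine ⟨ε', ?_, ?_⟩
        · rw [List.cons_append, ql2_cons, ql2_cons (m := y :: m')]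
          have : (x.1 == y.1) = false := by simpa using c
          rw [List.cons_append] at ihe ⊢
          simp only [hhead, List.head?_cons, Option.any_some, this, if_false,
            Bool.false_eq_true]
          rw [ihe]
          ring
        · rcases ihsp with ⟨hno', rfl⟩ | ⟨hrl', rfl⟩
          · exact Or.inl ⟨by rwa [RL_cons_cons], rfl⟩
          · refine Or.inr ⟨by rwa [RL_cons_cons], ?_⟩
            rw [(ls_cons x (y :: m') (by simp)).1
              (fun h => c ((RL_singleton_head x y m').mp h.2))]

theorem ql2_invRev : ∀ l : List (α × Bool), ql2 (FreeGroup.invRev l) = - ql2 l := by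
  intro l
  induction l with
  | nil => simp [FreeGroup.invRev, ql2_nil]
  | cons x m ih =>
    rw [invRev_cons]
    cases m with
    | nil =>
      simp only [FreeGroup.invRev_empty, List.nil_append]
      rw [ql2_singleton, ql2_singleton, e_not, tr_neg]
    | cons y m' =>
      obtain ⟨ε, he, hsp⟩ := eps [(x.1, !x.2)] (FreeGroup.invRev (y :: m'))
      rw [he, ih, ql2_singleton]
      have hrl : RL (FreeGroup.invRev (y :: m')) [(x.1, !x.2)] ↔ x.1 = y.1 := by
        rw [RL_invRev_singleton, RL_singleton_head]
      by_cases c : x.1 = y.1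
      · rcases hsp with ⟨hno, -⟩ | ⟨-, heps⟩
        · exact absurd (hrl.mpr c) hno
        · rw [hs_singleton, ls_invRev] at heps
          simp only at heps
          rw [show -hs (y :: m') + e (!x.2) = -(hs (y :: m') + e x.2) by rw [e_not]; ring,
            tr_neg, tr_neg, e_not, tr_neg] at heps
          rw [ql2_cons x (y :: m')]
          simp only [List.head?_cons, Option.any_some, c, beq_self_eq_true, if_true]
          rw [show e x.2 + hs (y :: m') = hs (y :: m') + e x.2 from add_comm _ _]
          rw [e_not, tr_neg]
          omega
      · rcases hsp with ⟨-, rfl⟩ | ⟨hr, -⟩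
        · rw [ql2_cons x (y :: m')]
          have : (x.1 == y.1) = false := by simpa using c
          simp only [List.head?_cons, Option.any_some, this, if_false, Bool.false_eq_true]
          rw [e_not, tr_neg]
          ring
        · exact absurd (hrl.mp hr) c

end W

section Red
variable [DecidableEq α]

/-- no cancellation between adjacent letters -/
def P : (α × Bool) → (α × Bool) → Prop := fun p q => ¬(p.1 = q.1 ∧ p.2 = !q.2)

theorem reduce_eq_self_of_chain' : ∀ {l : List (α × Bool)}, List.Chain' P l →
    FreeGroup.reduce l = l := by
  intro l
  induction l with
  | nil => exact fun _ => rfl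
  | cons x m ih =>
    intro h
    have hm := ih h.tail
    rw [FreeGroup.reduce.cons, hm]
    cases m with
    | nil => rfl
    | cons y t =>
      simp only
      rw [if_neg ((List.isChain_cons_cons.mp h).1)]

theorem chain'_reduce (l : List (α × Bool)) : List.Chain' P (FreeGroup.reduce l) := by
  induction l with
  | nil => exact List.isChain_nil
  | cons x m ih =>
    rw [FreeGroup.reduce.cons]
    rcases h : FreeGroup.reduce m with - | ⟨y, t⟩
    · exact List.isChain_singleton _
    · rw [h] at ih
      simp only
      by_cases hc : x.1 = y.1 ∧ x.2 = !y.2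
      · rw [if_pos hc]; exact ih.tail
      · rw [if_neg hc]; exact List.isChain_cons_cons.mpr ⟨hc, ih⟩

theorem chain'_toWord (x : FreeGroup α) : List.Chain' P x.toWord := by
  rw [← FreeGroup.reduce_toWord]
  exact chain'_reduce _

theorem invRev_concat (d : List (α × Bool)) (x : α × Bool) :
    FreeGroup.invRev (d ++ [x]) = (x.1, !x.2) :: FreeGroup.invRev d := by
  simp [FreeGroup.invRev]

theorem decomp : ∀ (v u : List (α × Bool)), List.Chain' P u → List.Chain' P v →
    ∃ a d b, u = a ++ d ∧ v = FreeGroup.invRev d ++ b ∧ List.Chain' P (a ++ b) := by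
  intro v
  induction v with
  | nil =>
    intro u hu _
    exact ⟨u, [], [], by simp, by simp [FreeGroup.invRev], by simpa using hu⟩
  | cons yv v' ih =>
    intro u hu hv
    rcases List.eq_nil_or_concat u with rfl | ⟨u', x, rfl⟩
    · exact ⟨[], [], yv :: v', by simp, by simp [FreeGroup.invRev], by simpa using hv⟩
    rw [List.concat_eq_append] at hu ⊢
    · by_cases hc : yv = (x.1, !x.2)
      · obtain ⟨a, d', b, h1, h2, h3⟩ := ih u' (List.isChain_append.mp hu).1 hv.tail
        refine ⟨a, d' ++ [x], b, by rw [h1, List.append_assoc], ?_, h3⟩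
        rw [invRev_concat, ← hc, List.cons_append, ← h2]
      · refine ⟨u' ++ [x], [], yv :: v', by simp, by simp [FreeGroup.invRev], ?_⟩
        rw [List.Chain', List.isChain_append]
        refine ⟨hu, hv, ?_⟩
        intro z hz w hw
        simp only [List.getLast?_concat, Option.mem_some_iff] at hz
        simp only [List.head?_cons, Option.mem_some_iff] at hw
        subst hz hw
        rintro ⟨ha, hb⟩
        exact hc (Prod.ext ha.symm (by cases x.2 <;> cases yv.2 <;> simp_all))

end Red

section Main
variable [DecidableEq α] [BEq α] [LawfulBEq α]

theorem quasi (x y : FreeGroup α) :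
    -3 ≤ ql2 ((x * y).toWord) - ql2 x.toWord - ql2 y.toWord ∧
    ql2 ((x * y).toWord) - ql2 x.toWord - ql2 y.toWord ≤ 3 := by
  obtain ⟨a, d, b, ha, hb, hab⟩ := decomp y.toWord x.toWord (chain'_toWord x) (chain'_toWord y)
  have hxy : (x * y).toWord = a ++ b := by
    have hmk : x * y = FreeGroup.mk (a ++ b) := by
      conv_lhs => rw [← FreeGroup.mk_toWord (x := x), ← FreeGroup.mk_toWord (x := y)]
      rw [ha, hb, ← FreeGroup.mul_mk, ← FreeGroup.mul_mk, ← FreeGroup.mul_mk,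
        ← FreeGroup.inv_mk]
      group
    rw [hmk, FreeGroup.toWord_mk, reduce_eq_self_of_chain' hab]
  obtain ⟨e1, he1, hs1⟩ := eps d a
  obtain ⟨e2, he2, hs2⟩ := eps b (FreeGroup.invRev d)
  obtain ⟨e3, he3, hs3⟩ := eps b a
  have hinv : ql2 (FreeGroup.invRev d) = - ql2 d := ql2_invRev d
  rw [ls_invRev] at hs2
  have t1 := tr_add_spec (ls a) (hs d)
  have t2 := tr_add_spec (-hs d) (hs b)
  have t3 := tr_add_spec (ls a) (hs b)
  have tn := tr_neg (hs d)
  rw [hxy, ha, hb, he1, he2, he3, hinv]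
  rcases hs1 with ⟨-, rfl⟩ | ⟨-, rfl⟩ <;> rcases hs2 with ⟨-, rfl⟩ | ⟨-, rfl⟩ <;>
    rcases hs3 with ⟨-, rfl⟩ | ⟨-, rfl⟩ <;>
    rcases t1 with h1 | h1 | h1 <;> rcases t2 with h2 | h2 | h2 <;>
    rcases t3 with h3 | h3 | h3 <;>
    constructor <;> omega

end Main
end QL

/-- `ql w` is the sum of `tr` of the exponents of the syllables in the
reduced syllable form of `w`. -/
def ql {n : ℕ} (w : FreeGroup (Fin n)) : ℤ :=
  ((w.toWord.splitBy (fun p q => p.1 == q.1)).map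
    (fun s => tr ((s.map (fun p => if p.2 then (1 : ℤ) else -1)).sum))).sum

theorem ql_eq {n : ℕ} (w : FreeGroup (Fin n)) : ql w = QL.ql2 w.toWord := by
  rw [ql, QL.splitBy_eq_sb]
  exact (QL.sb_spec _).1

theorem ql_inv {n : ℕ} (w : FreeGroup (Fin n)) : ql w⁻¹ = - ql w := by
  rw [ql_eq, ql_eq, FreeGroup.toWord_inv, QL.ql2_invRev]

theorem ql_quasi {n : ℕ} (x y : FreeGroup (Fin n)) :
    -3 ≤ ql (x * y) - ql x - ql y ∧ ql (x * y) - ql x - ql y ≤ 3 := by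
  rw [ql_eq, ql_eq, ql_eq]
  exact QL.quasi x y

theorem ql_commutator (n : ℕ) (hn : 2 ≤ n) (f g : FreeGroup (Fin n)) :
    -9 ≤ ql (f⁻¹ * g⁻¹ * f * g) ∧ ql (f⁻¹ * g⁻¹ * f * g) ≤ 9 := by
  obtain ⟨h1a, h1b⟩ := ql_quasi (f⁻¹ * g⁻¹ * f) g
  obtain ⟨h2a, h2b⟩ := ql_quasi (f⁻¹ * g⁻¹) f
  obtain ⟨h3a, h3b⟩ := ql_quasi f⁻¹ g⁻¹
  have h4 := ql_inv f
  have h5 := ql_inv g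
  constructor <;> omega
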